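/- Let V₀ : (0,∞) → M₂(ℂ) be continuous, E₁ ∈ ℂ, and let u₁ : (0,∞) → M₂(ℂ) be a twice differentiable matrix function with u₁(r) invertible for all r satisfying −u₁''(r) + V₀(r)u₁(r) = E₁ u₁(r). Set w₁(r) = u₁'(r)u₁(r)⁻¹ and V₁(r) = V₀(r) − 2w₁'(r). Then for any k² ∈ ℂ and any twice differentiable (vector- or matrix-valued) function ψ satisfying −ψ''(r) + V₀(r)ψ(r) = k² ψ(r), the function φ(r) = w₁(r)ψ(r) − ψ'(r) satisfies −φ''(r) + V₁(r)φ(r) = k² φ(r) for all r. -/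

import Mathlib

open Matrix Set

lemma matMulDeriv {l m p : Type*} [Fintype m] {A A' : ℝ → Matrix l m ℂ}
    {B B' : ℝ → Matrix m p ℂ} {r : ℝ}
    (hA : ∀ i j, HasDerivAt (fun t => A t i j) (A' r i j) r)
    (hB : ∀ i j, HasDerivAt (fun t => B t i j) (B' r i j) r) (i : l) (j : p) :
    HasDerivAt (fun t => (A t * B t) i j) ((A' r * B r + A r * B' r) i j) r := by
  simp only [Matrix.mul_apply, Matrix.add_apply]
  rw [← Finset.sum_add_distrib]
  exact HasDerivAt.fun_sum fun k _ => (hA i k).mul (hB k j)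

/-- First-order (Darboux) SUSY transformation for the matrix Schrödinger equation:
if `-ψ'' + V₀ψ = k²ψ`, then `φ = w₁ψ - ψ'` satisfies `-φ'' + V₁φ = k²φ` with
`V₁ = V₀ - 2w₁'`, where `w₁ = u₁'u₁⁻¹` for an invertible matrix solution `u₁` at
factorization energy `E₁`. -/
theorem firstOrder_SUSY_intertwining {n : ℕ}
    (V₀ u₁ u₁' u₁'' : ℝ → Matrix (Fin 2) (Fin 2) ℂ) (E₁ : ℂ)
    (hV₀ : ContinuousOn V₀ (Ioi 0))
    (hu₁ : ∀ r ∈ Ioi (0:ℝ), ∀ i j, HasDerivAt (fun t => u₁ t i j) (u₁' r i j) r)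
    (hu₁' : ∀ r ∈ Ioi (0:ℝ), ∀ i j, HasDerivAt (fun t => u₁' t i j) (u₁'' r i j) r)
    (hinv₁ : ∀ r ∈ Ioi (0:ℝ), IsUnit (u₁ r))
    (heq₁ : ∀ r ∈ Ioi (0:ℝ), -u₁'' r + V₀ r * u₁ r = E₁ • u₁ r)
    (w₁ w₁d V₁ : ℝ → Matrix (Fin 2) (Fin 2) ℂ)
    (hw₁ : ∀ r, w₁ r = u₁' r * (u₁ r)⁻¹)
    (hw₁d : ∀ r ∈ Ioi (0:ℝ), ∀ i j, HasDerivAt (fun t => w₁ t i j) (w₁d r i j) r)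
    (hV₁ : ∀ r, V₁ r = V₀ r - (2:ℂ) • w₁d r)
    (k2 : ℂ) (ψ ψ' ψ'' : ℝ → Matrix (Fin 2) (Fin n) ℂ)
    (hψ : ∀ r ∈ Ioi (0:ℝ), ∀ i j, HasDerivAt (fun t => ψ t i j) (ψ' r i j) r)
    (hψ' : ∀ r ∈ Ioi (0:ℝ), ∀ i j, HasDerivAt (fun t => ψ' t i j) (ψ'' r i j) r)
    (hψeq : ∀ r ∈ Ioi (0:ℝ), -ψ'' r + V₀ r * ψ r = k2 • ψ r)
    (φ : ℝ → Matrix (Fin 2) (Fin n) ℂ)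
    (hφ : ∀ r, φ r = w₁ r * ψ r - ψ' r) :
    ∀ r ∈ Ioi (0:ℝ),
      (∀ i j, DifferentiableAt ℝ (fun t => φ t i j) r) ∧
      (∀ i j, HasDerivAt (deriv (fun t => φ t i j))
        ((V₁ r * φ r - k2 • φ r) i j) r) := by
  -- inverse facts
  have hinvmul : ∀ t ∈ Ioi (0:ℝ), (u₁ t)⁻¹ * u₁ t = 1 := fun t ht =>
    Matrix.nonsing_inv_mul _ ((Matrix.isUnit_iff_isUnit_det _).1 (hinv₁ t ht))
  have hmulinv : ∀ t ∈ Ioi (0:ℝ), u₁ t * (u₁ t)⁻¹ = 1 := fun t ht =>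
    Matrix.mul_nonsing_inv _ ((Matrix.isUnit_iff_isUnit_det _).1 (hinv₁ t ht))
  have hwu : ∀ t ∈ Ioi (0:ℝ), w₁ t * u₁ t = u₁' t := fun t ht => by
    rw [hw₁, mul_assoc, hinvmul t ht, mul_one]
  -- Riccati equation for w₁d
  have hric : ∀ t ∈ Ioi (0:ℝ), w₁d t = V₀ t - E₁ • 1 - w₁ t * w₁ t := by
    intro t ht
    have hmemt : Ioi (0:ℝ) ∈ nhds t := Ioi_mem_nhds ht
    have hM : w₁d t * u₁ t + w₁ t * u₁' t = u₁'' t := by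
      ext i j
      have hev : (fun s => u₁' s i j) =ᶠ[nhds t] (fun s => (w₁ s * u₁ s) i j) :=
        Filter.eventuallyEq_of_mem hmemt (fun s hs => by rw [hwu s hs])
      have h1 : HasDerivAt (fun s => u₁' s i j)
          ((w₁d t * u₁ t + w₁ t * u₁' t) i j) t :=
        (matMulDeriv (hw₁d t ht) (hu₁ t ht) i j).congr_of_eventuallyEq hev
      exact (h1.unique (hu₁' t ht i j))
    have hu2 : u₁'' t = V₀ t * u₁ t - E₁ • u₁ t := by
      have h := heq₁ t ht
      rw [← h]; abel
    have hcan : w₁d t * u₁ t = (V₀ t - E₁ • 1 - w₁ t * w₁ t) * u₁ t := by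
      have h3 : w₁ t * u₁' t = w₁ t * (w₁ t * u₁ t) := by rw [hwu t ht]
      have h1 : w₁d t * u₁ t = u₁'' t - w₁ t * u₁' t := by rw [← hM]; abel
      rw [h1, hu2, h3]
      simp only [sub_mul, smul_mul_assoc, one_mul, mul_assoc]
    calc w₁d t = w₁d t * u₁ t * (u₁ t)⁻¹ := by rw [mul_assoc, hmulinv t ht, mul_one]
      _ = (V₀ t - E₁ • 1 - w₁ t * w₁ t) * u₁ t * (u₁ t)⁻¹ := by rw [hcan]
      _ = _ := by rw [mul_assoc, hmulinv t ht, mul_one]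
  set Φd : ℝ → Matrix (Fin 2) (Fin n) ℂ :=
    fun t => (k2 - E₁) • ψ t - w₁ t * φ t with hΦd
  have hφd : ∀ t ∈ Ioi (0:ℝ), ∀ i j, HasDerivAt (fun s => φ s i j) (Φd t i j) t := by
    intro t ht i j
    have hd : HasDerivAt (fun s => φ s i j)
        ((w₁d t * ψ t + w₁ t * ψ' t - ψ'' t) i j) t := by
      simp only [hφ, Matrix.sub_apply]
      exact (matMulDeriv (hw₁d t ht) (hψ t ht) i j).sub (hψ' t ht i j)
    have heqm : w₁d t * ψ t + w₁ t * ψ' t - ψ'' t = Φd t := by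
      have hψ2 : ψ'' t = V₀ t * ψ t - k2 • ψ t := by
        have h := hψeq t ht
        rw [← h]; abel
      rw [hψ2, hric t ht]
      simp only [hΦd, hφ]
      simp only [Matrix.sub_mul, Matrix.mul_sub, Matrix.smul_mul, Matrix.mul_smul,
        Matrix.mul_assoc, Matrix.one_mul, smul_sub, sub_smul, smul_smul]
      module
    rw [← heqm]; exact hd
  intro r hr
  have hmem : Ioi (0:ℝ) ∈ nhds r := Ioi_mem_nhds hr
  refine ⟨fun i j => (hφd r hr i j).differentiableAt, fun i j => ?_⟩
  have hderiv_ev : (deriv (fun t => φ t i j)) =ᶠ[nhds r] (fun t => Φd t i j) :=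
    Filter.eventuallyEq_of_mem hmem (fun t ht => (hφd t ht i j).deriv)
  have hD : HasDerivAt (fun t => Φd t i j)
      (((k2 - E₁) • ψ' r - (w₁d r * φ r + w₁ r * Φd r)) i j) r := by
    simp only [hΦd, Matrix.sub_apply, Matrix.smul_apply, smul_eq_mul]
    exact ((hψ r hr i j).const_mul (k2 - E₁)).sub
      (matMulDeriv (hw₁d r hr) (fun i j => hφd r hr i j) i j)
  have halg : (k2 - E₁) • ψ' r - (w₁d r * φ r + w₁ r * Φd r)
      = V₁ r * φ r - k2 • φ r := by
    rw [hV₁, hric r hr]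
    simp only [hΦd, hφ]
    simp only [Matrix.sub_mul, Matrix.mul_sub, Matrix.smul_mul, Matrix.mul_smul,
      Matrix.mul_assoc, Matrix.one_mul, smul_sub, sub_smul, smul_smul]
    module
  rw [halg] at hD
  exact hD.congr_of_eventuallyEq hderiv_ev
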